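/- Let F be a self-conjugate subfield of ℂ and f ∈ F[z,z⁻¹]. Let ⟦f⟧_F denote the set of all g ∈ F[z,z⁻¹] that are trivially equicorrelational to f. Then ⟦f⟧_F is self-conjugate and ⟦f⟧_F = [f]_F ∪ [f̄]_F. If f is a generalized palindrome, then every element of ⟦f⟧_F is a generalized palindrome and ⟦f⟧_F = [f]_F = [f̄]_F. If f is not a generalized palindrome, then no element of ⟦f⟧_F is a generalized palindrome, and ⟦f⟧_F is the union of the two disjoint, non-self-conjugate F[z,z⁻¹]-associate classes [f]_F and [f̄]_F, which are conjugates of each other. -/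

import Mathlib

open LaurentPolynomial
open scoped Classical

/-- The length of a Laurent polynomial: 1 plus the difference between the maximal and
minimal exponents occurring with nonzero coefficient; the length of 0 is 0. -/
noncomputable def len {F : Type*} [Field F] (f : LaurentPolynomial F) : ℤ :=
  if h : f = 0 then 0
  else f.coeff.support.max'
      (Finsupp.support_nonempty_iff.mpr (fun h' => h (AddMonoidAlgebra.coeff_injective h')))
     - f.coeff.support.min'
      (Finsupp.support_nonempty_iff.mpr (fun h' => h (AddMonoidAlgebra.coeff_injective h'))) + 1

/-- Substitution `f(z) ↦ f(z^m)`: the image of `f` under the ring homomorphism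
sending `z` to `z^m`. -/
noncomputable def subst {F : Type*} [Field F] (m : ℤ) (f : LaurentPolynomial F) :
    LaurentPolynomial F :=
  AddMonoidAlgebra.mapDomainRingHom F (AddMonoidHom.mulLeft m) f

/-- The subring `F[z,z⁻¹]` of `E[z,z⁻¹]` consisting of Laurent polynomials all of whose
coefficients lie in the subfield `F` of `E`. -/
noncomputable def LRing {E : Type*} [Field E] (F : Subfield E) :
    Subring (LaurentPolynomial E) where
  carrier := {f : LaurentPolynomial E | ∀ n : ℤ, f.coeff n ∈ F}
  zero_mem' := fun n => F.zero_mem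
  one_mem' := by
    intro n
    rw [AddMonoidAlgebra.one_def, AddMonoidAlgebra.coeff_single, Finsupp.single_apply]
    split_ifs
    · exact F.one_mem
    · exact F.zero_mem
  add_mem' := by
    intro f g hf hg n
    rw [AddMonoidAlgebra.coeff_add, Finsupp.add_apply]
    exact add_mem (hf n) (hg n)
  neg_mem' := by
    intro f hf n
    rw [AddMonoidAlgebra.coeff_neg, Finsupp.neg_apply]
    exact neg_mem (hf n)
  mul_mem' := by
    intro f g hf hg n
    rw [AddMonoidAlgebra.mul_apply]
    refine sum_mem fun a ha => sum_mem fun b hb => ?_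
    dsimp only
    split_ifs
    · exact mul_mem (hf a) (hg b)
    · exact zero_mem F

/-- The conjugate of `f(z) = Σ f_j z^j`, namely `f̄(z) = Σ conj(f_j) z^{-j}`. -/
noncomputable def lconj (f : LaurentPolynomial ℂ) : LaurentPolynomial ℂ :=
  AddMonoidAlgebra.ofCoeff
    (Finsupp.equivMapDomain (Equiv.neg ℤ) (Finsupp.mapRange (starRingEnd ℂ) (map_zero _) f.coeff))

/-- `f` and `g` are equicorrelational: `f·f̄ = c·g·ḡ` for some positive real `c`. -/
def Equicorrelational (f g : LaurentPolynomial ℂ) : Prop :=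
  ∃ c : ℝ, 0 < c ∧ f * lconj f = C (c : ℂ) * (g * lconj g)

/-- `f` and `g` are trivially equicorrelational: `g` is a `ℂ[z,z⁻¹]`-associate of `f`
or of `f̄`. -/
def TrivEquicorrelational (f g : LaurentPolynomial ℂ) : Prop :=
  Associated g f ∨ Associated g (lconj f)

/-- A generalized palindrome: `f̄` is a `ℂ[z,z⁻¹]`-associate of `f`. -/
def GenPalindrome (f : LaurentPolynomial ℂ) : Prop :=
  Associated (lconj f) f

/-- `g` is an `F[z,z⁻¹]`-associate of `f`: `g = u·f` for some unit `u` of the subring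
`F[z,z⁻¹]` of `ℂ[z,z⁻¹]`. -/
def FAssoc (F : Subfield ℂ) (g f : LaurentPolynomial ℂ) : Prop :=
  ∃ u : (LRing F)ˣ, g = ((u : LRing F) : LaurentPolynomial ℂ) * f

/-- The `F[z,z⁻¹]`-associate class of `f`. -/
def facl (F : Subfield ℂ) (f : LaurentPolynomial ℂ) : Set (LaurentPolynomial ℂ) :=
  {g | FAssoc F g f}

/-- The `F`-trivial equicorrelationality class of `f`: all elements of `F[z,z⁻¹]`
that are trivially equicorrelational to `f`. -/
def fte (F : Subfield ℂ) (f : LaurentPolynomial ℂ) : Set (LaurentPolynomial ℂ) :=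
  {g | g ∈ LRing F ∧ TrivEquicorrelational f g}

/-- A `k`-ary sequence: a Laurent polynomial whose support is a segment of consecutive
integers and whose nonzero coefficients are complex `k`-th roots of unity. -/
def IsKary (k : ℕ) (f : LaurentPolynomial ℂ) : Prop :=
  (∀ i j l : ℤ, i ≤ j → j ≤ l → f.coeff i ≠ 0 → f.coeff l ≠ 0 → f.coeff j ≠ 0) ∧
  ∀ n : ℤ, f.coeff n ≠ 0 → (f.coeff n) ^ k = 1

/-- A binary sequence: a Laurent polynomial whose support is a segment of consecutive
integers and whose nonzero coefficients all lie in `{1, -1}`. -/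
def IsBinary (f : LaurentPolynomial ℂ) : Prop :=
  (∀ i j l : ℤ, i ≤ j → j ≤ l → f.coeff i ≠ 0 → f.coeff l ≠ 0 → f.coeff j ≠ 0) ∧
  ∀ n : ℤ, f.coeff n ≠ 0 → f.coeff n = 1 ∨ f.coeff n = -1


section Aux

lemma lconj_apply (f : LaurentPolynomial ℂ) (n : ℤ) :
    (lconj f).coeff n = (starRingEnd ℂ) (f.coeff (-n)) := rfl

lemma lconj_lconj (f : LaurentPolynomial ℂ) : lconj (lconj f) = f := by
  ext n; rw [lconj_apply, lconj_apply, neg_neg, Complex.conj_conj]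

lemma lconj_add (f g : LaurentPolynomial ℂ) : lconj (f + g) = lconj f + lconj g := by
  ext n
  rw [AddMonoidAlgebra.coeff_add, Finsupp.add_apply, lconj_apply, lconj_apply, lconj_apply,
    AddMonoidAlgebra.coeff_add, Finsupp.add_apply, map_add]

lemma lconj_single (n : ℤ) (c : ℂ) :
    lconj (AddMonoidAlgebra.single n c) = AddMonoidAlgebra.single (-n) ((starRingEnd ℂ) c) := by
  ext m
  rw [lconj_apply, AddMonoidAlgebra.coeff_single, AddMonoidAlgebra.coeff_single,
    Finsupp.single_apply, Finsupp.single_apply]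
  rcases eq_or_ne n (-m) with h | h
  · rw [if_pos h, if_pos (by omega)]
  · rw [if_neg h, if_neg (by omega), map_zero]

lemma lconj_C (c : ℂ) : lconj (C c) = C ((starRingEnd ℂ) c) := by
  rw [← single_eq_C (R := ℂ), ← single_eq_C (R := ℂ), lconj_single, neg_zero]

lemma lconj_T (n : ℤ) : lconj (T n) = T (-n) := by
  ext m
  rw [lconj_apply, T_apply, T_apply]
  rcases eq_or_ne n (-m) with h | h
  · rw [if_pos h, if_pos (by omega), map_one]
  · rw [if_neg h, if_neg (by omega), map_zero]

/-- `lconj` as a ring homomorphism. -/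
noncomputable def lconjHom : LaurentPolynomial ℂ →+* LaurentPolynomial ℂ :=
  AddMonoidAlgebra.liftNCRingHom (LaurentPolynomial.C.comp (starRingEnd ℂ))
    { toFun := fun n => T (-(Multiplicative.toAdd n))
      map_one' := by
        show T (-(0:ℤ)) = 1
        rw [neg_zero, T_zero]
      map_mul' := by
        intro x y
        show T (-(Multiplicative.toAdd x + Multiplicative.toAdd y)) = _
        rw [neg_add, T_add] }
    (fun x y => Commute.all _ _)

lemma lconj_eq (f : LaurentPolynomial ℂ) : lconj f = lconjHom f := by
  induction f using AddMonoidAlgebra.induction with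
  | zero =>
      have : lconj 0 = 0 := by
        ext n; rw [lconj_apply]; simp
      rw [this, map_zero]
  | single_add n c f hn hc ih =>
      rw [lconj_add, map_add, ih]
      congr 1
      rw [lconj_single]
      show _ = AddMonoidAlgebra.liftNC _ _ (AddMonoidAlgebra.single n c)
      rw [AddMonoidAlgebra.liftNC_single]
      show _ = C ((starRingEnd ℂ) c) * T (-n)
      rw [single_eq_C_mul_T]

lemma lconj_mul (f g : LaurentPolynomial ℂ) : lconj (f * g) = lconj f * lconj g := by
  rw [lconj_eq, lconj_eq, lconj_eq, map_mul]

lemma isUnit_lconj {f : LaurentPolynomial ℂ} (h : IsUnit f) : IsUnit (lconj f) := by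
  rw [lconj_eq]; exact h.map lconjHom

lemma associated_lconj {a b : LaurentPolynomial ℂ} (h : Associated a b) :
    Associated (lconj a) (lconj b) := by
  obtain ⟨u, hu⟩ := h
  refine ⟨(isUnit_lconj u.isUnit).unit, ?_⟩
  rw [IsUnit.unit_spec, ← lconj_mul, hu]

lemma exists_unit_form {f : LaurentPolynomial ℂ} (hf : IsUnit f) :
    ∃ (c : ℂ) (n : ℤ), c ≠ 0 ∧ f = LaurentPolynomial.C c * T n := by
  obtain ⟨u, rfl⟩ := hf
  set f : LaurentPolynomial ℂ := ↑u
  set g : LaurentPolynomial ℂ := ↑u⁻¹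
  have hfg : f * g = 1 := u.mul_inv
  obtain ⟨n, f', hf'⟩ := exists_T_pow f
  obtain ⟨m, g', hg'⟩ := exists_T_pow g
  have key : f' * g' = Polynomial.X ^ (n + m) := by
    apply Polynomial.toLaurent_injective
    rw [map_mul, hf', hg', Polynomial.toLaurent_X_pow]
    rw [mul_mul_mul_comm, hfg, one_mul, ← T_add]
    norm_cast
  have hdvd : f' ∣ Polynomial.X ^ (n + m) := ⟨g', key.symm⟩
  obtain ⟨i, hi, v, hv⟩ := (dvd_prime_pow Polynomial.prime_X (n + m)).mp hdvd
  obtain ⟨r, hr, hrv⟩ := Polynomial.isUnit_iff.mp v.isUnit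
  have hr0 : r ≠ 0 := hr.ne_zero
  have hthis : f' * Polynomial.C r = Polynomial.X ^ i := by rw [hrv, hv]
  have hf'' : f' = Polynomial.C r⁻¹ * Polynomial.X ^ i := by
    calc f' = f' * Polynomial.C r * Polynomial.C r⁻¹ := by
              rw [mul_assoc, ← Polynomial.C_mul, mul_inv_cancel₀ hr0, Polynomial.C_1, mul_one]
    _ = Polynomial.C r⁻¹ * Polynomial.X ^ i := by rw [hthis, mul_comm]
  refine ⟨r⁻¹, (i : ℤ) - n, inv_ne_zero hr0, ?_⟩
  have hfT : f = Polynomial.toLaurent f' * T (-(n : ℤ)) := by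
    rw [hf', mul_T_assoc]
    norm_num
  rw [hfT, hf'', map_mul, Polynomial.toLaurent_C, Polynomial.toLaurent_X_pow,
    mul_assoc, ← T_add, sub_eq_add_neg]

lemma mem_LRing_iff {F : Subfield ℂ} {f : LaurentPolynomial ℂ} :
    f ∈ LRing F ↔ ∀ n : ℤ, f.coeff n ∈ F := Iff.rfl

lemma single_mem_LRing {F : Subfield ℂ} {c : ℂ} (hc : c ∈ F) (n : ℤ) :
    AddMonoidAlgebra.single n c ∈ LRing F := by
  rw [mem_LRing_iff]
  intro m
  rw [AddMonoidAlgebra.coeff_single, Finsupp.single_apply]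
  split_ifs
  · exact hc
  · exact F.zero_mem

lemma FAssoc_iff {F : Subfield ℂ} {g f : LaurentPolynomial ℂ} :
    FAssoc F g f ↔ ∃ (c : ℂ) (n : ℤ), c ≠ 0 ∧ c ∈ F ∧ g = C c * T n * f := by
  constructor
  · rintro ⟨u, rfl⟩
    have hu : IsUnit ((↑(↑u : LRing F) : LaurentPolynomial ℂ)) :=
      u.isUnit.map (LRing F).subtype
    obtain ⟨c, n, hc, h⟩ := exists_unit_form hu
    have hcF := (mem_LRing_iff.mp (↑u : LRing F).2) n
    rw [h, ← single_eq_C_mul_T, AddMonoidAlgebra.coeff_single, Finsupp.single_eq_same] at hcF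
    exact ⟨c, n, hc, hcF, by rw [h]⟩
  · rintro ⟨c, n, hc, hcF, rfl⟩
    have hmem1 : (C c * T n : LaurentPolynomial ℂ) ∈ LRing F := by
      rw [← single_eq_C_mul_T]; exact single_mem_LRing hcF n
    have hmem2 : (C c⁻¹ * T (-n) : LaurentPolynomial ℂ) ∈ LRing F := by
      rw [← single_eq_C_mul_T]; exact single_mem_LRing (F.inv_mem hcF) (-n)
    have hvi : (C c * T n : LaurentPolynomial ℂ) * (C c⁻¹ * T (-n)) = 1 := by
      rw [mul_mul_mul_comm, ← map_mul, mul_inv_cancel₀ hc, map_one, one_mul, ← T_add,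
        add_neg_cancel, T_zero]
    have hiv : (C c⁻¹ * T (-n) : LaurentPolynomial ℂ) * (C c * T n) = 1 := by
      rw [mul_mul_mul_comm, ← map_mul, inv_mul_cancel₀ hc, map_one, one_mul, ← T_add,
        neg_add_cancel, T_zero]
    exact ⟨⟨⟨_, hmem1⟩, ⟨_, hmem2⟩, Subtype.ext hvi, Subtype.ext hiv⟩, rfl⟩

lemma FAssoc_refl (F : Subfield ℂ) (f : LaurentPolynomial ℂ) : FAssoc F f f :=
  ⟨1, by rw [Units.val_one, OneMemClass.coe_one, one_mul]⟩

lemma FAssoc_symm {F : Subfield ℂ} {g f : LaurentPolynomial ℂ}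
    (h : FAssoc F g f) : FAssoc F f g := by
  rw [FAssoc_iff] at h ⊢
  obtain ⟨c, n, hc, hcF, rfl⟩ := h
  refine ⟨c⁻¹, -n, inv_ne_zero hc, F.inv_mem hcF, ?_⟩
  rw [← mul_assoc, mul_mul_mul_comm, ← map_mul, inv_mul_cancel₀ hc, map_one, one_mul,
    ← T_add, neg_add_cancel, T_zero, one_mul]

lemma FAssoc_trans {F : Subfield ℂ} {a b c : LaurentPolynomial ℂ}
    (h1 : FAssoc F a b) (h2 : FAssoc F b c) : FAssoc F a c := by
  obtain ⟨u, rfl⟩ := h1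
  obtain ⟨v, rfl⟩ := h2
  refine ⟨u * v, ?_⟩
  rw [Units.val_mul, MulMemClass.coe_mul, mul_assoc]

lemma FAssoc.associated {F : Subfield ℂ} {g f : LaurentPolynomial ℂ}
    (h : FAssoc F g f) : Associated g f := by
  obtain ⟨u, rfl⟩ := h
  have hu : IsUnit ((↑(↑u : LRing F) : LaurentPolynomial ℂ)) :=
    u.isUnit.map (LRing F).subtype
  exact (Associated.symm ⟨hu.unit, by rw [IsUnit.unit_spec, mul_comm]⟩)

lemma mem_LRing_of_FAssoc {F : Subfield ℂ} {g f : LaurentPolynomial ℂ}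
    (hf : f ∈ LRing F) (h : FAssoc F g f) : g ∈ LRing F := by
  obtain ⟨u, rfl⟩ := h
  exact mul_mem (↑u : LRing F).2 hf

lemma assoc_to_FAssoc {F : Subfield ℂ} {f g : LaurentPolynomial ℂ}
    (hf : f ∈ LRing F) (hg : g ∈ LRing F) (h : Associated g f) : FAssoc F g f := by
  by_cases hf0 : f = 0
  · subst hf0
    have hg0 : g = 0 := (associated_zero_iff_eq_zero g).mp h
    subst hg0
    exact FAssoc_refl F 0
  · obtain ⟨w, hw⟩ := h.symm
    obtain ⟨c, n, hc, hcn⟩ := exists_unit_form w.isUnit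
    have hgf : g = C c * T n * f := by
      rw [← hw, hcn, mul_comm]
    obtain ⟨j, hj⟩ : ∃ j, f.coeff j ≠ 0 := by
      by_contra hcon
      push_neg at hcon
      exact hf0 (AddMonoidAlgebra.coeff_injective (Finsupp.ext fun a => hcon a))
    have hval : g.coeff (n + j) = c * f.coeff j := by
      rw [hgf, ← single_eq_C_mul_T, AddMonoidAlgebra.coeff_single_mul_apply, neg_add_cancel_left]
    have hcF : c ∈ F := by
      have hc' : c = g.coeff (n + j) * (f.coeff j)⁻¹ := by
        rw [hval, mul_assoc, mul_inv_cancel₀ hj, mul_one]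
      rw [hc']
      exact F.mul_mem (mem_LRing_iff.mp hg _) (F.inv_mem (mem_LRing_iff.mp hf _))
    exact FAssoc_iff.mpr ⟨c, n, hc, hcF, hgf⟩

lemma star_ne_zero' {c : ℂ} (hc : c ≠ 0) : (starRingEnd ℂ) c ≠ 0 := by
  intro h0
  apply hc
  have := congrArg (starRingEnd ℂ) h0
  rwa [Complex.conj_conj, map_zero] at this

end Aux

theorem stmt10 (F : Subfield ℂ) (hF : ∀ x ∈ F, (starRingEnd ℂ) x ∈ F)
    (f : LaurentPolynomial ℂ) (hf : f ∈ LRing F) :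
    lconj '' fte F f = fte F f ∧
    fte F f = facl F f ∪ facl F (lconj f) ∧
    (GenPalindrome f →
      (∀ g ∈ fte F f, GenPalindrome g) ∧
      fte F f = facl F f ∧ facl F f = facl F (lconj f)) ∧
    (¬ GenPalindrome f →
      (∀ g ∈ fte F f, ¬ GenPalindrome g) ∧
      Disjoint (facl F f) (facl F (lconj f)) ∧
      lconj '' facl F f ≠ facl F f ∧
      lconj '' facl F (lconj f) ≠ facl F (lconj f) ∧
      lconj '' facl F f = facl F (lconj f)) :=  by
  have hlcF : ∀ {g : LaurentPolynomial ℂ}, g ∈ LRing F → lconj g ∈ LRing F := by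
    intro g hg
    rw [mem_LRing_iff]
    intro n
    rw [lconj_apply]
    exact hF _ (mem_LRing_iff.mp hg _)
  have hflc : lconj f ∈ LRing F := hlcF hf
  have hstep : ∀ g ∈ fte F f, lconj g ∈ fte F f := by
    rintro g ⟨hgF, htriv⟩
    refine ⟨hlcF hgF, ?_⟩
    rcases htriv with h | h
    · exact Or.inr (associated_lconj h)
    · left
      have h2 := associated_lconj h
      rwa [lconj_lconj] at h2
  have part1 : lconj '' fte F f = fte F f := by
    apply Set.Subset.antisymm
    · rintro _ ⟨g, hg, rfl⟩
      exact hstep g hg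
    · intro g hg
      exact ⟨lconj g, hstep g hg, lconj_lconj g⟩
  have part2 : fte F f = facl F f ∪ facl F (lconj f) := by
    ext g
    constructor
    · rintro ⟨hgF, h | h⟩
      · exact Or.inl (assoc_to_FAssoc hf hgF h)
      · exact Or.inr (assoc_to_FAssoc hflc hgF h)
    · rintro (h | h)
      · exact ⟨mem_LRing_of_FAssoc hf h, Or.inl h.associated⟩
      · exact ⟨mem_LRing_of_FAssoc hflc h, Or.inr h.associated⟩
  refine ⟨part1, part2, ?_, ?_⟩
  · intro hp
    have hfe : facl F f = facl F (lconj f) := by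
      have h1 : FAssoc F (lconj f) f := assoc_to_FAssoc hf hflc hp
      ext g
      exact ⟨fun h => FAssoc_trans h (FAssoc_symm h1), fun h => FAssoc_trans h h1⟩
    refine ⟨?_, ?_, hfe⟩
    · rintro g ⟨hgF, h | h⟩
      · exact ((associated_lconj h).trans hp).trans h.symm
      · have h2 : Associated (lconj g) f := by
          have h3 := associated_lconj h
          rwa [lconj_lconj] at h3
        exact (h2.trans hp.symm).trans h.symm
    · rw [part2, hfe, Set.union_self]
  · intro hp
    refine ⟨?_, ?_, ?_, ?_, ?_⟩
    · rintro g ⟨hgF, h | h⟩ hgp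
      · exact hp (((associated_lconj h).symm.trans hgp).trans h)
      · have h2 : Associated (lconj g) f := by
          have h3 := associated_lconj h
          rwa [lconj_lconj] at h3
        exact hp ((h2.symm.trans hgp).trans h).symm
    · rw [Set.disjoint_left]
      intro g h1 h2
      exact hp (FAssoc_trans (FAssoc_symm h2) h1).associated
    · intro heq
      have hmem : lconj f ∈ facl F f := by
        rw [← heq]
        exact ⟨f, FAssoc_refl F f, rfl⟩
      exact hp (FAssoc.associated hmem)
    · intro heq
      have hmem : f ∈ facl F (lconj f) := by
        rw [← heq]
        exact ⟨lconj f, FAssoc_refl F (lconj f), lconj_lconj f⟩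
      exact hp (FAssoc.associated hmem).symm
    · ext g
      constructor
      · rintro ⟨h, hh, rfl⟩
        obtain ⟨c, n, hc, hcF, rfl⟩ := FAssoc_iff.mp hh
        exact FAssoc_iff.mpr ⟨(starRingEnd ℂ) c, -n, star_ne_zero' hc, hF c hcF,
          by rw [lconj_mul, lconj_mul, lconj_C, lconj_T]⟩
      · intro hg
        obtain ⟨c, n, hc, hcF, hge⟩ := FAssoc_iff.mp hg
        refine ⟨lconj g, ?_, lconj_lconj g⟩
        exact FAssoc_iff.mpr ⟨(starRingEnd ℂ) c, -n, star_ne_zero' hc, hF c hcF,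
          by rw [hge, lconj_mul, lconj_mul, lconj_C, lconj_T, lconj_lconj]⟩
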